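/- Let scores h_1 ≥ h_2 ≥ ... ≥ h_n be real numbers (sorted in decreasing order) with h_K > h_{K+1}, let K < n and ε ∈ (0,1). Then λ = h_{K+1} is a minimizer of the function φ(λ) = ((K+ε)/n)·λ + (1/n)·Σ_{i=1}^n max(h_i − λ, 0). -/
import Mathlib


theorem topK_threshold_minimizes
    (n K : ℕ) (hK1 : 1 ≤ K) (hKn : K < n)
    (h : Fin n → ℝ)
    (hsort : ∀ i j : Fin n, i ≤ j → h j ≤ h i)
    (hgap : h ⟨K, hKn⟩ < h ⟨K - 1, by omega⟩)
    (ε : ℝ) (hε : ε ∈ Set.Ioo (0:ℝ) 1) :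
    ∀ μ : ℝ,
      ((K + ε) / n) * h ⟨K, hKn⟩ + (1 / n) * ∑ i, max (h i - h ⟨K, hKn⟩) 0
        ≤ ((K + ε) / n) * μ + (1 / n) * ∑ i, max (h i - μ) 0 := by
  intro μ
  obtain ⟨hε0, hε1⟩ := hε
  set lam := h ⟨K, hKn⟩ with hlam
  have hn0 : (0:ℝ) < n := by
    have : 0 < n := by omega
    exact_mod_cast this
  have hcount : ∀ (P : ℕ → Prop) [DecidablePred P] (m : ℕ), m ≤ n →
      ((Finset.range n).filter P) = Finset.range m →
      ∀ c : ℝ, (∑ i : Fin n, (if P (i : ℕ) then c else 0)) = m * c := by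
    intro P _ m hm hfilt c
    rw [Fin.sum_univ_eq_sum_range (fun i => if P i then c else 0)]
    rw [← Finset.sum_filter, hfilt, Finset.sum_const, Finset.card_range]
    simp [nsmul_eq_mul]
  have key : (K + ε) * lam + (∑ i, max (h i - lam) 0)
      ≤ (K + ε) * μ + (∑ i, max (h i - μ) 0) := by
    rcases le_total lam μ with hle | hle
    · -- μ ≥ lam
      have hsum : ∑ i, max (h i - lam) 0
          ≤ ∑ i : Fin n, (max (h i - μ) 0 + if (i : ℕ) < K then μ - lam else 0) := by
        apply Finset.sum_le_sum
        intro i _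
        by_cases hi : (i : ℕ) < K
        · simp only [hi, if_true]
          have t1 := le_max_left (h i - μ) (0:ℝ)
          have t2 := le_max_right (h i - μ) (0:ℝ)
          apply max_le <;> linarith
        · simp only [hi, if_false]
          have hiK : h i ≤ lam := hsort ⟨K, hKn⟩ i (by simp [Fin.le_def]; omega)
          have t2 := le_max_right (h i - μ) (0:ℝ)
          apply max_le <;> linarith
      rw [Finset.sum_add_distrib] at hsum
      rw [hcount (fun i => i < K) K (by omega)
        (by ext i; simp [Finset.mem_filter, Finset.mem_range]; omega) (μ - lam)] at hsum
      nlinarith [mul_nonneg hε0.le (sub_nonneg.2 hle)]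
    · -- μ ≤ lam
      have hsum : ∑ i : Fin n, (max (h i - lam) 0 + if (i : ℕ) ≤ K then lam - μ else 0)
          ≤ ∑ i, max (h i - μ) 0 := by
        apply Finset.sum_le_sum
        intro i _
        by_cases hi : (i : ℕ) ≤ K
        · simp only [hi, if_true]
          have hiK : lam ≤ h i := hsort i ⟨K, hKn⟩ (by simp [Fin.le_def]; omega)
          rw [max_eq_left (by linarith), max_eq_left (by linarith)]
          linarith
        · simp only [hi, if_false]
          have hiK : h i ≤ lam := hsort ⟨K, hKn⟩ i (by simp [Fin.le_def]; omega)
          have t2 := le_max_right (h i - μ) (0:ℝ)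
          rw [max_eq_right (by linarith)]
          linarith
      rw [Finset.sum_add_distrib] at hsum
      rw [hcount (fun i => i ≤ K) (K + 1) (by omega)
        (by ext i; simp [Finset.mem_filter, Finset.mem_range]; omega) (lam - μ)] at hsum
      have h1 : (0:ℝ) ≤ (1 - ε) * (lam - μ) :=
        mul_nonneg (by linarith) (by linarith)
      push_cast at hsum ⊢
      nlinarith [h1]
  have h1 : (0:ℝ) ≤ 1 / n := by positivity
  calc ((K:ℝ) + ε) / n * lam + 1 / n * ∑ i, max (h i - lam) 0
      = (1 / n) * ((K + ε) * lam + ∑ i, max (h i - lam) 0) := by ring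
    _ ≤ (1 / n) * ((K + ε) * μ + ∑ i, max (h i - μ) 0) :=
        mul_le_mul_of_nonneg_left key h1
    _ = ((K:ℝ) + ε) / n * μ + 1 / n * ∑ i, max (h i - μ) 0 := by ring
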